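/- The expected value of the coordinate d_1 with respect to the uniform (normalized Lebesgue) measure on the planar polytope P_5(1) = {(d_1,d_2) ∈ ℝ² : 0 ≤ d_1 ≤ 2, 0 ≤ d_2 ≤ 2, |d_1−d_2| ≤ 1, d_1+d_2 ≥ 1} equals 17/15. -/

import Mathlib

open MeasureTheory Set

/-- The fan triangulation moment polytope for equilateral pentagons:
`P_5(1) = {(d₁,d₂) : 0 ≤ d₁ ≤ 2, 0 ≤ d₂ ≤ 2, |d₁−d₂| ≤ 1, d₁+d₂ ≥ 1}`. -/
def pentagonPolytope : Set (Fin 2 → ℝ) :=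
  {d | 0 ≤ d 0 ∧ d 0 ≤ 2 ∧ 0 ≤ d 1 ∧ d 1 ≤ 2 ∧ |d 0 - d 1| ≤ 1 ∧ 1 ≤ d 0 + d 1}

noncomputable def penLen (x : ℝ) : ℝ := min 2 (x + 1) - |x - 1|

lemma penLen_def (x : ℝ) : penLen x = min 2 (x + 1) - |x - 1| := rfl

def penS : Set (ℝ × ℝ) :=
  {p | 0 ≤ p.1 ∧ p.1 ≤ 2 ∧ 0 ≤ p.2 ∧ p.2 ≤ 2 ∧ |p.1 - p.2| ≤ 1 ∧ 1 ≤ p.1 + p.2}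

lemma penS_closed : IsClosed penS := by
  have : penS = {p : ℝ × ℝ | 0 ≤ p.1} ∩ ({p | p.1 ≤ 2} ∩ ({p | 0 ≤ p.2} ∩ ({p | p.2 ≤ 2} ∩
      ({p | |p.1 - p.2| ≤ 1} ∩ {p | 1 ≤ p.1 + p.2})))) := by
    ext p; simp [penS, and_assoc]
  rw [this]
  refine (isClosed_le continuous_const continuous_fst).inter ?_
  refine (isClosed_le continuous_fst continuous_const).inter ?_
  refine (isClosed_le continuous_const continuous_snd).inter ?_
  refine (isClosed_le continuous_snd continuous_const).inter ?_
  refine (isClosed_le (continuous_fst.sub continuous_snd).abs continuous_const).inter ?_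
  exact isClosed_le continuous_const (continuous_fst.add continuous_snd)

lemma penS_meas : MeasurableSet penS := penS_closed.measurableSet

lemma penS_compact : IsCompact penS := by
  refine IsCompact.of_isClosed_subset
    ((isCompact_Icc.prod isCompact_Icc) : IsCompact (Icc (0:ℝ) 2 ×ˢ Icc (0:ℝ) 2))
    penS_closed ?_
  rintro ⟨x, y⟩ ⟨h1, h2, h3, h4, -⟩
  exact ⟨⟨h1, h2⟩, h3, h4⟩

lemma penS_section (x : ℝ) :
    Prod.mk x ⁻¹' penS =
      if x ∈ Icc (0:ℝ) 2 then Icc (|x - 1|) (min 2 (x + 1)) else (∅ : Set ℝ) := by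
  ext y
  split_ifs with hx
  · obtain ⟨hx0, hx2⟩ := hx
    simp only [penS, mem_preimage, mem_setOf_eq, mem_Icc, le_min_iff, abs_le]
    constructor
    · rintro ⟨-, -, h3, h4, ⟨h5, h6⟩, h7⟩
      exact ⟨⟨by linarith, by linarith⟩, h4, by linarith⟩
    · rintro ⟨⟨h1, h2⟩, h3, h4⟩
      exact ⟨hx0, hx2, by linarith, h3, ⟨by linarith, by linarith⟩, by linarith⟩
  · simp only [mem_empty_iff_false, iff_false, mem_preimage]
    rintro ⟨h1, h2, -⟩
    exact hx ⟨h1, h2⟩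

lemma penLen_eq (x : ℝ) (hx : x ∈ Icc (0:ℝ) 2) :
    volume (Prod.mk x ⁻¹' penS) = ENNReal.ofReal (penLen x) := by
  rw [penS_section, if_pos hx, Real.volume_Icc, ← penLen_def]

lemma abs_le_min (x : ℝ) (hx : x ∈ Icc (0:ℝ) 2) : |x - 1| ≤ min 2 (x + 1) := by
  obtain ⟨h0, h2⟩ := hx
  simp only [le_min_iff, abs_le]
  constructor <;> constructor <;> linarith

lemma penLen_nonneg (x : ℝ) (hx : x ∈ Icc (0:ℝ) 2) : 0 ≤ penLen x :=
  sub_nonneg.2 (abs_le_min x hx)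

lemma penLen_continuous : Continuous penLen :=
  (continuous_const.min (continuous_id.add continuous_const)).sub
    (continuous_id.sub continuous_const).abs

-- integral computations
lemma int_len_left : ∫ x in (0:ℝ)..1, penLen x = 1 := by
  rw [intervalIntegral.integral_congr (g := fun x => 2 * x)
    (fun x hx => by
      rw [uIcc_of_le (by norm_num : (0:ℝ) ≤ 1), mem_Icc] at hx
      rw [penLen, min_eq_right (by linarith), abs_of_nonpos (by linarith)]
      ring)]
  rw [intervalIntegral.integral_const_mul, integral_id]
  norm_num

lemma int_len_right : ∫ x in (1:ℝ)..2, penLen x = 3 / 2 := by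
  rw [intervalIntegral.integral_congr (g := fun x => 3 - x)
    (fun x hx => by
      rw [uIcc_of_le (by norm_num : (1:ℝ) ≤ 2), mem_Icc] at hx
      rw [penLen, min_eq_left (by linarith), abs_of_nonneg (by linarith)]
      ring)]
  rw [intervalIntegral.integral_sub (intervalIntegrable_const)
    (continuous_id'.intervalIntegrable 1 2), intervalIntegral.integral_const, integral_id]
  norm_num

lemma int_xlen_left : ∫ x in (0:ℝ)..1, x * penLen x = 2 / 3 := by
  rw [intervalIntegral.integral_congr (g := fun x => 2 * x ^ 2)
    (fun x hx => by
      rw [uIcc_of_le (by norm_num : (0:ℝ) ≤ 1), mem_Icc] at hx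
      rw [penLen, min_eq_right (by linarith), abs_of_nonpos (by linarith)]
      ring)]
  rw [intervalIntegral.integral_const_mul, integral_pow]
  norm_num

lemma int_xlen_right : ∫ x in (1:ℝ)..2, x * penLen x = 13 / 6 := by
  rw [intervalIntegral.integral_congr (g := fun x => 3 * x - x ^ 2)
    (fun x hx => by
      rw [uIcc_of_le (by norm_num : (1:ℝ) ≤ 2), mem_Icc] at hx
      rw [penLen, min_eq_left (by linarith), abs_of_nonneg (by linarith)]
      ring)]
  rw [intervalIntegral.integral_sub ((by fun_prop : Continuous fun x : ℝ => 3 * x).intervalIntegrable 1 2)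
    ((continuous_pow 2).intervalIntegrable 1 2),
    intervalIntegral.integral_const_mul, integral_pow, integral_id]
  norm_num

lemma int_len : ∫ x in Icc (0:ℝ) 2, penLen x = 5 / 2 := by
  rw [integral_Icc_eq_integral_Ioc, ← intervalIntegral.integral_of_le (by norm_num : (0:ℝ) ≤ 2),
    ← intervalIntegral.integral_add_adjacent_intervals
      (penLen_continuous.intervalIntegrable 0 1) (penLen_continuous.intervalIntegrable 1 2),
    int_len_left, int_len_right]
  norm_num

lemma int_xlen : ∫ x in Icc (0:ℝ) 2, x * penLen x = 17 / 6 := by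
  have hc : Continuous fun x => x * penLen x := continuous_id.mul penLen_continuous
  rw [integral_Icc_eq_integral_Ioc, ← intervalIntegral.integral_of_le (by norm_num : (0:ℝ) ≤ 2),
    ← intervalIntegral.integral_add_adjacent_intervals
      (hc.intervalIntegrable 0 1) (hc.intervalIntegrable 1 2),
    int_xlen_left, int_xlen_right]
  norm_num

lemma penS_volume : volume penS = ENNReal.ofReal (5 / 2) := by
  rw [Measure.volume_eq_prod, Measure.prod_apply penS_meas]
  have h1 : ∀ x : ℝ, volume (Prod.mk x ⁻¹' penS) =
      (Icc (0:ℝ) 2).indicator (fun x => ENNReal.ofReal (penLen x)) x := by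
    intro x
    by_cases hx : x ∈ Icc (0:ℝ) 2
    · rw [penLen_eq x hx, indicator_of_mem hx]
    · rw [penS_section, if_neg hx, indicator_of_notMem hx, measure_empty]
  simp_rw [h1]
  rw [lintegral_indicator measurableSet_Icc,
    ← ofReal_integral_eq_lintegral_ofReal
      (penLen_continuous.continuousOn.integrableOn_compact isCompact_Icc)
      ((ae_restrict_iff' measurableSet_Icc).2 (Filter.Eventually.of_forall penLen_nonneg)),
    int_len]

lemma penS_integral : ∫ p in penS, p.1 = 17 / 6 := by
  have hint : IntegrableOn (fun p : ℝ × ℝ => p.1) penS volume :=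
    continuous_fst.continuousOn.integrableOn_compact penS_compact
  rw [← integral_indicator penS_meas, Measure.volume_eq_prod,
    integral_prod _ (by
      rw [← Measure.volume_eq_prod, integrable_indicator_iff penS_meas]; exact hint)]
  have h1 : ∀ x : ℝ, (∫ y : ℝ, penS.indicator (fun p : ℝ × ℝ => p.1) (x, y)) =
      (Icc (0:ℝ) 2).indicator (fun x => x * penLen x) x := by
    intro x
    have : (fun y : ℝ => penS.indicator (fun p : ℝ × ℝ => p.1) (x, y)) =
        (Prod.mk x ⁻¹' penS).indicator (fun _ => x) := by
      ext y
      by_cases h : (x, y) ∈ penS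
      · rw [indicator_of_mem h, indicator_of_mem (show y ∈ Prod.mk x ⁻¹' penS from h)]
      · rw [indicator_of_notMem h, indicator_of_notMem (show y ∉ Prod.mk x ⁻¹' penS from h)]
    rw [this]
    by_cases hx : x ∈ Icc (0:ℝ) 2
    · rw [indicator_of_mem hx, penS_section, if_pos hx,
        integral_indicator measurableSet_Icc, setIntegral_const, Real.volume_real_Icc,
        ← penLen_def, max_eq_left (penLen_nonneg x hx), smul_eq_mul, mul_comm]
    · rw [indicator_of_notMem hx, penS_section, if_neg hx]
      simp
  simp_rw [h1]
  rw [integral_indicator measurableSet_Icc, int_xlen]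



lemma pentagon_pre : pentagonPolytope =
    (MeasurableEquiv.finTwoArrow : (Fin 2 → ℝ) ≃ᵐ ℝ × ℝ) ⁻¹' penS := rfl

/-- The expected value of the coordinate `d₁` with respect to the uniform
(normalized Lebesgue) measure on `P_5(1)` equals `17/15`. -/
theorem pentagon_expected_chord :
    (∫ d, d 0 ∂((MeasureTheory.volume pentagonPolytope)⁻¹ •
      MeasureTheory.volume.restrict pentagonPolytope)) = 17 / 15 := by
  have hvol : volume pentagonPolytope = ENNReal.ofReal (5 / 2) := by
    rw [pentagon_pre,
      (volume_preserving_finTwoArrow ℝ).measure_preimage penS_meas.nullMeasurableSet,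
      penS_volume]
  have hint : (∫ d in pentagonPolytope, d 0) = 17 / 6 := by
    rw [pentagon_pre, ← penS_integral]
    exact (volume_preserving_finTwoArrow ℝ).setIntegral_preimage_emb
      MeasurableEquiv.finTwoArrow.measurableEmbedding (fun p : ℝ × ℝ => p.1) penS
  rw [integral_smul_measure, hint, hvol, ENNReal.toReal_inv,
    ENNReal.toReal_ofReal (by norm_num)]
  norm_num
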